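/- Let G be a cactus on n vertices with k pendant vertices, n ≥ k ≥ 0, and G not isomorphic to C_3, C_3 with a pendant edge, or C_4. Then PI(G) ≥ (n-1)(n-2) - 2⌊(n-k-1)/2⌋. -/

import Mathlib

open SimpleGraph Finset
open scoped Classical

variable {V : Type*}

/-- Number of vertices strictly closer to `x` than to `y` (excluding `x` and `y`). -/
noncomputable def nclose (G : SimpleGraph V) (x y : V) : ℕ :=
  Nat.card {w : V | w ≠ x ∧ w ≠ y ∧ G.dist w x < G.dist w y}

/-- The contribution `PI(e) = n_{xy}(x) + n_{xy}(y)` of an edge. -/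
noncomputable def PIedge (G : SimpleGraph V) : Sym2 V → ℕ :=
  Sym2.lift ⟨fun x y => nclose G x y + nclose G y x, fun _ _ => add_comm _ _⟩

/-- The vertex PI index of a graph. -/
noncomputable def PI [Fintype V] (G : SimpleGraph V) : ℕ :=
  ∑ e ∈ G.edgeFinset, PIedge G e

/-- A cactus: connected, and any two cycles share at most one vertex. -/
def IsCactus (G : SimpleGraph V) : Prop :=
  G.Connected ∧ ∀ (u v : V) (c₁ : G.Walk u u) (c₂ : G.Walk v v),
    c₁.IsCycle → c₂.IsCycle → {e | e ∈ c₁.edges} ≠ {e | e ∈ c₂.edges} →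
    Set.ncard {x | x ∈ c₁.support ∧ x ∈ c₂.support} ≤ 1
/-- The number of pendant vertices (vertices of degree 1). -/
noncomputable def numPendant [Fintype V] (G : SimpleGraph V) : ℕ :=
  Nat.card {v : V | G.degree v = 1}

/-- The triangle with one pendant edge: vertices `0,1,2,3`, edges `01, 12, 20, 23`. -/
def pawGraph : SimpleGraph (Fin 4) :=
  SimpleGraph.fromEdgeSet {s(0, 1), s(1, 2), s(2, 0), s(2, 3)}

lemma exists_parent (G : SimpleGraph V) (hc : G.Connected) {w v : V} (hvw : v ≠ w) :
    ∃ u, G.Adj v u ∧ G.dist w u + 1 = G.dist w v := by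
  have hpos : 0 < G.dist w v := (hc w v).pos_dist_of_ne (Ne.symm hvw)
  obtain ⟨p, hp⟩ := (hc v w).exists_walk_length_eq_dist
  obtain ⟨u, hadj, q, hq⟩ := SimpleGraph.Walk.exists_eq_cons_of_ne hvw p
  refine ⟨u, hadj, ?_⟩
  have h1 : G.dist w u ≤ q.length := by
    have := SimpleGraph.dist_le q.reverse
    simpa using this
  have h2 : q.length + 1 = G.dist v w := by
    rw [← hp, hq, SimpleGraph.Walk.length_cons]
  have h3 : G.dist w v ≤ G.dist w u + G.dist u v := hc.dist_triangle
  have h4 : G.dist u v = 1 := by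
    rw [SimpleGraph.dist_eq_one_iff_adj]; exact hadj.symm
  have h5 : G.dist v w = G.dist w v := SimpleGraph.dist_comm
  omega

/-- `e` is a "horizontal" edge w.r.t. `w`: its endpoints are equidistant from `w`. -/
def Hor (G : SimpleGraph V) (w : V) (e : Sym2 V) : Prop :=
  ∃ x y, e = s(x, y) ∧ G.dist w x = G.dist w y

lemma hor_mk {G : SimpleGraph V} {w x y : V} :
    Hor G w s(x, y) ↔ G.dist w x = G.dist w y := by
  constructor
  · rintro ⟨a, b, hab, hd⟩
    rw [Sym2.eq_iff] at hab
    rcases hab with ⟨rfl, rfl⟩ | ⟨rfl, rfl⟩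
    · exact hd
    · exact hd.symm
  · intro h; exact ⟨x, y, rfl, h⟩

/-- In a connected graph on `n` vertices, at most `m - (n-1)` edges are horizontal w.r.t. `w`. -/
lemma hor_card_bound [Fintype V] (G : SimpleGraph V) (hc : G.Connected) (w : V) :
    (G.edgeFinset.filter (Hor G w)).card + (Fintype.card V - 1) ≤ G.edgeFinset.card := by
  classical
  -- injection from vertices ≠ w into non-horizontal edges
  have key : (Fintype.card V - 1) ≤ (G.edgeFinset.filter (fun e => ¬ Hor G w e)).card := by
    have hinj : ∀ v ∈ (univ : Finset V).erase w, ∀ hv : v ≠ w, True := fun _ _ _ => trivial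
    -- define parent edge
    have hex : ∀ v : V, v ≠ w → ∃ u, G.Adj v u ∧ G.dist w u + 1 = G.dist w v := fun v hv =>
      exists_parent G hc hv
    choose par hpar hdist using hex
    have := Finset.card_le_card_of_injOn
      (f := fun v => if h : v = w then s(v, v) else s(v, par v h))
      (s := (univ : Finset V).erase w)
      (t := G.edgeFinset.filter (fun e => ¬ Hor G w e)) ?_ ?_
    · simpa [Finset.card_erase_of_mem] using this
    · intro v hv
      have hvw : v ≠ w := Finset.ne_of_mem_erase hv
      simp only []
      rw [dif_neg hvw]
      simp only [Finset.mem_coe, Finset.mem_filter, SimpleGraph.mem_edgeFinset, SimpleGraph.mem_edgeSet]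
      refine ⟨hpar v hvw, ?_⟩
      rw [hor_mk]
      have := hdist v hvw
      omega
    · intro a ha b hb hab
      have haw : a ≠ w := Finset.ne_of_mem_erase ha
      have hbw : b ≠ w := Finset.ne_of_mem_erase hb
      simp only [] at hab
      rw [dif_neg haw, dif_neg hbw, Sym2.eq_iff] at hab
      rcases hab with ⟨h1, h2⟩ | ⟨h1, h2⟩
      · exact h1
      · -- a = par b, b = par a : contradiction on distances
        exfalso
        have da := hdist a haw
        have db := hdist b hbw
        rw [← h1] at db
        rw [h2] at da
        omega
  have hsplit := Finset.card_filter_add_card_filter_not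
    (s := G.edgeFinset) (p := Hor G w)
  omega

lemma nclose_eq_card [Fintype V] (G : SimpleGraph V) (x y : V) :
    nclose G x y = (univ.filter (fun w => w ≠ x ∧ w ≠ y ∧ G.dist w x < G.dist w y)).card := by
  rw [nclose, Nat.card_coe_set_eq, Set.ncard_eq_toFinset_card', Set.toFinset_setOf]

lemma piedge_add_eq [Fintype V] (G : SimpleGraph V) (hc : G.Connected) {x y : V}
    (hadj : G.Adj x y) :
    PIedge G s(x, y) + (univ.filter (fun w => G.dist w x = G.dist w y)).card
      = Fintype.card V - 2 := by
  classical
  have hxy : x ≠ y := hadj.ne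
  have hd1 : G.dist x y = 1 := SimpleGraph.dist_eq_one_iff_adj.mpr hadj
  have hd1' : G.dist y x = 1 := SimpleGraph.dist_eq_one_iff_adj.mpr hadj.symm
  have hPI : PIedge G s(x, y) = nclose G x y + nclose G y x := by
    rw [PIedge, Sym2.lift_mk]
  set S := univ.filter (fun w : V => w ≠ x ∧ w ≠ y) with hSdef
  set A := univ.filter (fun w : V => w ≠ x ∧ w ≠ y ∧ G.dist w x < G.dist w y) with hAdef
  set B := univ.filter (fun w : V => w ≠ x ∧ w ≠ y ∧ G.dist w y < G.dist w x) with hBdef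
  set C := univ.filter (fun w : V => w ≠ x ∧ w ≠ y ∧ G.dist w x = G.dist w y) with hCdef
  have heqf : (univ.filter (fun w => G.dist w x = G.dist w y)) = C := by
    rw [hCdef]
    apply Finset.filter_congr
    intro w _
    constructor
    · intro h
      refine ⟨?_, ?_, h⟩
      · rintro rfl
        simp [SimpleGraph.dist_self, hd1] at h
      · rintro rfl
        simp [SimpleGraph.dist_self, hd1'] at h
    · exact fun h => h.2.2
  have hnclose2 : nclose G y x = B.card := by
    rw [nclose_eq_card, hBdef]
    congr 1
    apply Finset.filter_congr
    intro w _
    tauto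
  have hScard : S.card = Fintype.card V - 2 := by
    have : S = (univ.erase y).erase x := by
      ext w
      simp [hSdef, and_comm]
    rw [this, Finset.card_erase_of_mem, Finset.card_erase_of_mem]
    · rw [Finset.card_univ]; omega
    · simp
    · simp [Finset.mem_erase, hxy]
  have t1 := Finset.card_filter_add_card_filter_not
    (s := S) (p := fun w => G.dist w x < G.dist w y)
  have t2 := Finset.card_filter_add_card_filter_not
    (s := S.filter (fun w => ¬ G.dist w x < G.dist w y))
    (p := fun w => G.dist w y < G.dist w x)
  have hA : S.filter (fun w => G.dist w x < G.dist w y) = A := by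
    rw [hSdef, hAdef, Finset.filter_filter]
    apply Finset.filter_congr
    intro w _
    tauto
  have hB : (S.filter (fun w => ¬ G.dist w x < G.dist w y)).filter
      (fun w => G.dist w y < G.dist w x) = B := by
    rw [hSdef, hBdef, Finset.filter_filter, Finset.filter_filter]
    apply Finset.filter_congr
    intro w _
    have h1 : ¬ G.dist w x < G.dist w y ∧ G.dist w y < G.dist w x ↔
        G.dist w y < G.dist w x := by omega
    tauto
  have hC : (S.filter (fun w => ¬ G.dist w x < G.dist w y)).filter
      (fun w => ¬ G.dist w y < G.dist w x) = C := by
    rw [hSdef, hCdef, Finset.filter_filter, Finset.filter_filter]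
    apply Finset.filter_congr
    intro w _
    have h1 : ¬ G.dist w x < G.dist w y ∧ ¬ G.dist w y < G.dist w x ↔
        G.dist w x = G.dist w y := by omega
    tauto
  rw [hA] at t1
  rw [hB, hC] at t2
  rw [hPI, nclose_eq_card, hnclose2, heqf, ← hAdef, ← hScard]
  omega

lemma PI_lower [Fintype V] (G : SimpleGraph V) (hc : G.Connected) :
    G.edgeFinset.card * (Fintype.card V - 2) ≤
      PI G + Fintype.card V * (G.edgeFinset.card - (Fintype.card V - 1)) := by
  classical
  set n := Fintype.card V with hn
  set m := G.edgeFinset.card with hm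
  have step1 : ∀ e ∈ G.edgeFinset,
      PIedge G e + (univ.filter (fun w => Hor G w e)).card = n - 2 := by
    intro e he
    induction e using Sym2.ind with
    | _ x y =>
      have hadj : G.Adj x y := by
        rw [SimpleGraph.mem_edgeFinset, SimpleGraph.mem_edgeSet] at he
        exact he
      have : (univ.filter (fun w => Hor G w s(x, y)))
          = univ.filter (fun w => G.dist w x = G.dist w y) := by
        apply Finset.filter_congr
        intro w _
        exact hor_mk
      rw [this]
      exact piedge_add_eq G hc hadj
  have step2 : PI G + ∑ e ∈ G.edgeFinset, (univ.filter (fun w => Hor G w e)).card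
      = m * (n - 2) := by
    rw [PI, ← Finset.sum_add_distrib]
    rw [Finset.sum_congr rfl step1, Finset.sum_const, smul_eq_mul]
  have step3 : ∑ e ∈ G.edgeFinset, (univ.filter (fun w => Hor G w e)).card
      ≤ n * (m - (n - 1)) := by
    have hswap : ∑ e ∈ G.edgeFinset, (univ.filter (fun w => Hor G w e)).card
        = ∑ w : V, (G.edgeFinset.filter (Hor G w)).card := by
      simp only [Finset.card_filter]
      exact Finset.sum_comm
    rw [hswap]
    calc ∑ w : V, (G.edgeFinset.filter (Hor G w)).card
        ≤ ∑ _w : V, (m - (n - 1)) := by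
          apply Finset.sum_le_sum
          intro w _
          have := hor_card_bound G hc w
          omega
      _ = n * (m - (n - 1)) := by
          rw [Finset.sum_const, smul_eq_mul, Finset.card_univ]
  omega

lemma reachable_of_delete {G : SimpleGraph V} {e : Sym2 V} {a b : V}
    (hab : (G \ fromEdgeSet {e}).Reachable a b) {u w : V}
    (hadj : G.Adj u w) (he : e = s(a, b)) :
    (G \ fromEdgeSet {e}).Reachable u w := by
  by_cases h : s(u, w) = e
  · rw [he, Sym2.eq_iff] at h
    rcases h with ⟨rfl, rfl⟩ | ⟨rfl, rfl⟩
    · exact hab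
    · exact hab.symm
  · apply SimpleGraph.Adj.reachable
    rw [SimpleGraph.sdiff_adj]
    refine ⟨hadj, ?_⟩
    rw [SimpleGraph.fromEdgeSet_adj]
    rintro ⟨h1, -⟩
    exact h (by simpa using h1)

lemma connected_of_delete {G : SimpleGraph V} (hc : G.Connected) {e : Sym2 V} {a b : V}
    (hab : (G \ fromEdgeSet {e}).Reachable a b) (he : e = s(a, b)) :
    (G \ fromEdgeSet {e}).Connected := by
  rw [SimpleGraph.connected_iff]
  refine ⟨?_, hc.nonempty⟩
  intro u w
  have hr : G.Reachable u w := hc u w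
  obtain ⟨p⟩ := hr
  induction p with
  | nil => exact SimpleGraph.Reachable.refl _
  | cons h q ih => exact (reachable_of_delete hab h he).trans ih

lemma exists_spanning_tree [Fintype V] (G : SimpleGraph V) (hc : G.Connected) :
    ∃ T : SimpleGraph V, T ≤ G ∧ T.IsTree := by
  classical
  suffices H : ∀ (N : ℕ) (G : SimpleGraph V), G.edgeFinset.card = N → G.Connected →
      ∃ T : SimpleGraph V, T ≤ G ∧ T.IsTree by
    exact H G.edgeFinset.card G rfl hc
  intro N
  induction N using Nat.strong_induction_on with
  | _ N ih =>
    intro G hcard hconn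
    by_cases ha : G.IsAcyclic
    · exact ⟨G, le_rfl, hconn, ha⟩
    · rw [SimpleGraph.IsAcyclic] at ha
      push_neg at ha
      obtain ⟨v, c, hcyc⟩ := ha
      -- get an edge of the cycle
      have hlen : 3 ≤ c.length := hcyc.three_le_length
      have hne : c.edges ≠ [] := by
        intro h
        have := SimpleGraph.Walk.length_edges c
        rw [h] at this
        simp at this
        omega
      obtain ⟨e, hemem⟩ := List.exists_mem_of_ne_nil _ hne
      have heG : e ∈ G.edgeSet := SimpleGraph.Walk.edges_subset_edgeSet c hemem
      -- e is not a bridge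
      have hnb : ¬ G.IsBridge e := by
        rw [SimpleGraph.isBridge_iff_mem_and_forall_cycle_notMem]
        push_neg
        exact ⟨v, c, hcyc, hemem⟩
        exact heG
      induction e using Sym2.ind with
      | _ x y =>
        have hadj : G.Adj x y := heG
        have hreach : (G \ fromEdgeSet {s(x, y)}).Reachable x y := by
          rw [SimpleGraph.isBridge_iff] at hnb
          push_neg at hnb
          exact hnb
        set G' := G \ fromEdgeSet {s(x, y)} with hG'
        have hle : G' ≤ G := sdiff_le
        have hconn' : G'.Connected := connected_of_delete hconn hreach rfl
        have hcard' : G'.edgeFinset.card < N := by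
          rw [← hcard]
          apply Finset.card_lt_card
          constructor
          · intro f hf
            rw [SimpleGraph.mem_edgeFinset] at hf ⊢
            exact SimpleGraph.edgeSet_mono hle hf
          · intro hsub
            have hx : s(x, y) ∈ G.edgeFinset := by
              rw [SimpleGraph.mem_edgeFinset]; exact heG
            have := hsub hx
            rw [SimpleGraph.mem_edgeFinset, SimpleGraph.mem_edgeSet] at this
            rw [hG', SimpleGraph.sdiff_adj, SimpleGraph.fromEdgeSet_adj] at this
            exact this.2 ⟨rfl, hadj.ne⟩
        obtain ⟨T, hT1, hT2⟩ := ih G'.edgeFinset.card hcard' G' (by congr!) hconn'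
        exact ⟨T, hT1.trans hle, hT2⟩

/-- A vertex on a cycle has two distinct neighbors. -/
lemma two_neighbors_of_mem_cycle {G : SimpleGraph V} {u v : V} {c : G.Walk u u}
    (hc : c.IsCycle) (hv : v ∈ c.support) :
    ∃ a b : V, a ≠ b ∧ G.Adj v a ∧ G.Adj v b := by
  classical
  have hc' : (c.rotate v hv).IsCycle := hc.rotate hv
  set c' := c.rotate v hv with hc'def
  clear_value c'
  cases c' with
  | nil => exact absurd hc' (SimpleGraph.Walk.IsCycle.not_of_nil)
  | cons h p =>
    rename_i x
    have hpath : p.IsPath ∧ s(v, x) ∉ p.edges :=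
      (SimpleGraph.Walk.cons_isCycle_iff p h).mp hc'
    have hvx : v ≠ x := h.ne
    obtain ⟨y, h2, q, hq⟩ := SimpleGraph.Walk.exists_eq_cons_of_ne hvx p.reverse
    refine ⟨x, y, ?_, h, h2⟩
    rintro rfl
    apply hpath.2
    have : s(v, x) ∈ p.reverse.edges := by
      rw [hq]
      simp
    rwa [SimpleGraph.Walk.edges_reverse, List.mem_reverse] at this

lemma two_le_degree_of_mem_cycle {G : SimpleGraph V} [Fintype V] {u v : V} {c : G.Walk u u}
    (hc : c.IsCycle) (hv : v ∈ c.support) : 2 ≤ G.degree v := by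
  obtain ⟨a, b, hab, ha, hb⟩ := two_neighbors_of_mem_cycle hc hv
  have : ({a, b} : Finset V) ⊆ G.neighborFinset v := by
    intro z hz
    rw [Finset.mem_insert, Finset.mem_singleton] at hz
    rcases hz with rfl | rfl <;> simp [SimpleGraph.mem_neighborFinset, ha, hb]
  calc 2 = ({a, b} : Finset V).card := by rw [Finset.card_pair hab]
    _ ≤ (G.neighborFinset v).card := Finset.card_le_card this
    _ = G.degree v := rfl

/-- Walks starting in a pendant K2-pair stay there. -/
lemma walk_confined {G : SimpleGraph V} {u v : V} (huv : G.Adj u v)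
    (hu : ∀ z, G.Adj u z → z = v) (hv : ∀ z, G.Adj v z → z = u) :
    ∀ {a b : V} (_ : G.Walk a b), a = u ∨ a = v → b = u ∨ b = v := by
  intro a b p
  induction p with
  | nil => exact fun h => h
  | cons hadj q ih =>
    rename_i s t r
    intro hs
    apply ih
    rcases hs with rfl | rfl
    · right; exact hu _ hadj
    · left; exact hv _ hadj

lemma edge_disjoint_cycles {G : SimpleGraph V} (hG : IsCactus G) {u v : V}
    {c₁ : G.Walk u u} {c₂ : G.Walk v v} (h₁ : c₁.IsCycle) (h₂ : c₂.IsCycle)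
    (hne : {e | e ∈ c₁.edges} ≠ {e | e ∈ c₂.edges}) {ε : Sym2 V}
    (he1 : ε ∈ c₁.edges) (he2 : ε ∈ c₂.edges) : False := by
  induction ε using Sym2.ind with
  | _ a b =>
    have hab : a ≠ b := by
      have := c₁.edges_subset_edgeSet he1
      rw [SimpleGraph.mem_edgeSet] at this
      exact this.ne
    have hsub : ({a, b} : Set V) ⊆ {x | x ∈ c₁.support ∧ x ∈ c₂.support} := by
      rintro z (rfl | rfl)
      · exact ⟨c₁.fst_mem_support_of_mem_edges he1, c₂.fst_mem_support_of_mem_edges he2⟩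
      · exact ⟨c₁.snd_mem_support_of_mem_edges he1, c₂.snd_mem_support_of_mem_edges he2⟩
    have hfin : ({x | x ∈ c₁.support ∧ x ∈ c₂.support} : Set V).Finite := by
      apply Set.Finite.subset (List.finite_toSet c₁.support)
      intro z hz
      exact hz.1
    have h2le : 2 ≤ ({x | x ∈ c₁.support ∧ x ∈ c₂.support} : Set V).ncard := by
      calc 2 = ({a, b} : Set V).ncard := (Set.ncard_pair hab).symm
        _ ≤ _ := Set.ncard_le_ncard hsub hfin
    have := hG.2 u v c₁ c₂ h₁ h₂ hne
    omega

lemma numPendant_eq [Fintype V] (G : SimpleGraph V) :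
    numPendant G = (univ.filter (fun v => G.degree v = 1)).card := by
  rw [numPendant, Nat.card_coe_set_eq, Set.ncard_eq_toFinset_card', Set.toFinset_setOf]

lemma fund_cycle {G T : SimpleGraph V} (hTle : T ≤ G) (hTc : T.Connected) {x y : V}
    (hadj : G.Adj x y) (hfT : s(x, y) ∉ T.edgeSet) :
    ∃ C : G.Walk x x, C.IsCycle ∧ s(x, y) ∈ C.edges ∧
      ∀ e ∈ C.edges, e = s(x, y) ∨ e ∈ T.edgeSet := by
  classical
  obtain ⟨p0⟩ := hTc y x
  let pa : T.Walk y x := p0.bypass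
  have hpa : pa.IsPath := p0.bypass_isPath
  let pg : G.Walk y x := pa.mapLe hTle
  have hpgedges : ∀ e ∈ pg.edges, e ∈ T.edgeSet := by
    intro e he
    have hfix : ∀ e : Sym2 V, Sym2.map ⇑(SimpleGraph.Hom.ofLE hTle) e = e := by
      intro e
      induction e using Sym2.ind with
      | _ a b => simp [SimpleGraph.Hom.ofLE_apply]
    have : pg.edges = pa.edges := by
      simp only [pg, SimpleGraph.Walk.mapLe, SimpleGraph.Walk.edges_map]
      rw [List.map_congr_left (fun e _ => hfix e)]; exact List.map_id _
    rw [this] at he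
    exact pa.edges_subset_edgeSet he
  have hnotmem : s(x, y) ∉ pg.edges := fun h => hfT (hpgedges _ h)
  have hcyc : (SimpleGraph.Walk.cons hadj pg).IsCycle := by
    rw [SimpleGraph.Walk.cons_isCycle_iff]
    exact ⟨hpa.mapLe _, hnotmem⟩
  refine ⟨SimpleGraph.Walk.cons hadj pg, hcyc, ?_, ?_⟩
  · simp
  · intro e he
    rw [SimpleGraph.Walk.edges_cons, List.mem_cons] at he
    rcases he with rfl | he
    · left; rfl
    · right; exact hpgedges _ he

lemma cactus_count [Fintype V] (G : SimpleGraph V) (hG : IsCactus G) :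
    G.edgeFinset.card = Fintype.card V - 1 ∨
    (Fintype.card V - 1 ≤ G.edgeFinset.card ∧
      2 * (G.edgeFinset.card - (Fintype.card V - 1)) + numPendant G + 1 ≤ Fintype.card V) := by
  classical
  obtain ⟨T, hTle, hTtree⟩ := exists_spanning_tree G hG.1
  have hTcard : T.edgeFinset.card + 1 = Fintype.card V := hTtree.card_edgeFinset
  have hTsub : T.edgeFinset ⊆ G.edgeFinset := by
    intro e he
    rw [SimpleGraph.mem_edgeFinset] at he ⊢
    exact SimpleGraph.edgeSet_mono hTle he
  have hmn : T.edgeFinset.card ≤ G.edgeFinset.card := Finset.card_le_card hTsub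
  set D := G.edgeFinset \ T.edgeFinset with hDdef
  have hDcard : D.card = G.edgeFinset.card - T.edgeFinset.card := Finset.card_sdiff_of_subset hTsub
  by_cases hD : D = ∅
  · left
    have : G.edgeFinset ⊆ T.edgeFinset := by
      rwa [hDdef, Finset.sdiff_eq_empty_iff_subset] at hD
    have := Finset.card_le_card this
    omega
  · right
    refine ⟨by omega, ?_⟩
    -- fundamental cycles
    have hP : ∀ f ∈ D, ∃ (w : V) (C : G.Walk w w), C.IsCycle ∧ f ∈ C.edges ∧
        ∀ e ∈ C.edges, e = f ∨ e ∈ T.edgeSet := by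
      intro f hf
      rw [hDdef, Finset.mem_sdiff, SimpleGraph.mem_edgeFinset,
        SimpleGraph.mem_edgeFinset] at hf
      obtain ⟨hfG, hfT⟩ := hf
      revert hfG hfT
      induction f using Sym2.ind with
      | _ x y =>
        intro hfG hfT
        rw [SimpleGraph.mem_edgeSet] at hfG
        obtain ⟨C, h1, h2, h3⟩ := fund_cycle hTle hTtree.isConnected hfG hfT
        exact ⟨x, C, h1, h2, h3⟩
    choose w C h1 h2 h3 using hP
    have hfD : ∀ f (hf : f ∈ D), f ∉ T.edgeSet := by
      intro f hf
      rw [hDdef, Finset.mem_sdiff, SimpleGraph.mem_edgeFinset,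
        SimpleGraph.mem_edgeFinset] at hf
      exact hf.2
    -- edge-different cycles
    have hedne : ∀ (f g : Sym2 V) (hf : f ∈ D) (hg : g ∈ D), f ≠ g →
        {e | e ∈ (C f hf).edges} ≠ {e | e ∈ (C g hg).edges} := by
      intro f g hf hg hfg heq
      have : f ∈ {e | e ∈ (C g hg).edges} := by
        rw [← heq]
        exact h2 f hf
      rcases h3 g hg f this with rfl | hmem
      · exact hfg rfl
      · exact hfD f hf hmem
    set U := D.attach.biUnion (fun f => ((C f.1 f.2).edges.toFinset)) with hUdef
    have hdisjU : ∀ f ∈ D.attach, ∀ g ∈ D.attach, f ≠ g →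
        Disjoint ((C f.1 f.2).edges.toFinset) ((C g.1 g.2).edges.toFinset) := by
      intro f _ g _ hfg
      rw [Finset.disjoint_left]
      intro e he1 he2
      rw [List.mem_toFinset] at he1 he2
      have hfg1 : f.1 ≠ g.1 := fun h => hfg (Subtype.ext h)
      exact edge_disjoint_cycles hG (h1 f.1 f.2) (h1 g.1 g.2)
        (hedne f.1 g.1 f.2 g.2 hfg1) he1 he2
    have hUcard : 3 * D.card ≤ U.card := by
      rw [hUdef, Finset.card_biUnion hdisjU]
      have : ∀ f ∈ D.attach, 3 ≤ ((C f.1 f.2).edges.toFinset).card := by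
        intro f _
        rw [List.toFinset_card_of_nodup ((h1 f.1 f.2).isTrail.edges_nodup),
          SimpleGraph.Walk.length_edges]
        exact (h1 f.1 f.2).three_le_length
      calc 3 * D.card = ∑ _f ∈ D.attach, 3 := by
            rw [Finset.sum_const, Finset.card_attach, smul_eq_mul, mul_comm]
        _ ≤ _ := Finset.sum_le_sum this
    have hUsub : U ⊆ G.edgeFinset := by
      intro e he
      rw [hUdef, Finset.mem_biUnion] at he
      obtain ⟨f, _, hef⟩ := he
      rw [List.mem_toFinset] at hef
      rw [SimpleGraph.mem_edgeFinset]
      exact (C f.1 f.2).edges_subset_edgeSet hef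
    -- pendant edges
    set Pd := univ.filter (fun v => G.degree v = 1) with hPddef
    have hnb : ∀ v ∈ Pd, ∃ z, G.Adj v z ∧ ∀ z', G.Adj v z' → z' = z := by
      intro v hv
      rw [hPddef, Finset.mem_filter] at hv
      have hcard : (G.neighborFinset v).card = 1 := hv.2
      obtain ⟨z, hz⟩ := Finset.card_eq_one.mp hcard
      refine ⟨z, ?_, ?_⟩
      · rw [← SimpleGraph.mem_neighborFinset, hz]; exact Finset.mem_singleton_self z
      · intro z' hz'
        rw [← SimpleGraph.mem_neighborFinset, hz, Finset.mem_singleton] at hz'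
        exact hz'
    choose nb hnb1 hnb2 using hnb
    set PdE := Pd.attach.image (fun v => s(v.1, nb v.1 v.2)) with hPdEdef
    have hPdEsub : PdE ⊆ G.edgeFinset := by
      intro e he
      rw [hPdEdef, Finset.mem_image] at he
      obtain ⟨v, _, rfl⟩ := he
      rw [SimpleGraph.mem_edgeFinset, SimpleGraph.mem_edgeSet]
      exact hnb1 v.1 v.2
    -- a vertex of degree ≥ 2 exists (on some cycle)
    obtain ⟨f₀, hf₀⟩ := Finset.nonempty_of_ne_empty hD
    have hw₀ : 2 ≤ G.degree (w f₀ hf₀) :=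
      two_le_degree_of_mem_cycle (h1 f₀ hf₀) ((C f₀ hf₀).start_mem_support)
    -- pendant vertices are not on cycles
    have hdisjUP : Disjoint U PdE := by
      rw [Finset.disjoint_left]
      intro e heU hePdE
      rw [hUdef, Finset.mem_biUnion] at heU
      obtain ⟨f, _, hef⟩ := heU
      rw [List.mem_toFinset] at hef
      rw [hPdEdef, Finset.mem_image] at hePdE
      obtain ⟨v, _, rfl⟩ := hePdE
      have hvs : v.1 ∈ (C f.1 f.2).support :=
        (C f.1 f.2).fst_mem_support_of_mem_edges hef
      have h2d : 2 ≤ G.degree v.1 := two_le_degree_of_mem_cycle (h1 f.1 f.2) hvs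
      have : G.degree v.1 = 1 := (Finset.mem_filter.mp v.2).2
      omega
    have hPdEcard : PdE.card = Pd.card := by
      rw [hPdEdef]
      rw [Finset.card_image_of_injOn, Finset.card_attach]
      intro a _ b _ hab
      simp only [Sym2.eq_iff] at hab
      rcases hab with ⟨h1', h2'⟩ | ⟨h1', h2'⟩
      · exact Subtype.ext h1'
      · -- K2 component: contradiction with cycle vertex
        exfalso
        have hadjab : G.Adj a.1 b.1 := by
          have := hnb1 a.1 a.2
          rwa [h2'] at this
        have hdega : G.degree a.1 = 1 := (Finset.mem_filter.mp a.2).2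
        have hdegb : G.degree b.1 = 1 := (Finset.mem_filter.mp b.2).2
        have hua : ∀ z, G.Adj a.1 z → z = b.1 := by
          intro z hz
          rw [hnb2 a.1 a.2 z hz]
          exact h2'
        have hub : ∀ z, G.Adj b.1 z → z = a.1 := by
          intro z hz
          rw [hnb2 b.1 b.2 z hz]
          exact h1'.symm
        obtain ⟨pw⟩ := hG.1 a.1 (w f₀ hf₀)
        have := walk_confined hadjab hua hub pw (Or.inl rfl)
        rcases this with h | h
        · rw [h] at hw₀; omega
        · rw [h] at hw₀; omega
    -- putting it together
    have htot : U.card + PdE.card ≤ G.edgeFinset.card := by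
      rw [← Finset.card_union_of_disjoint hdisjUP]
      apply Finset.card_le_card
      exact Finset.union_subset hUsub hPdEsub
    have hDpos : 1 ≤ D.card := Finset.card_pos.mpr (Finset.nonempty_of_ne_empty hD)
    rw [numPendant_eq, ← hPddef]
    omega

theorem stmt_14 [Fintype V] (G : SimpleGraph V) (hG : IsCactus G)
    (h3 : ¬Nonempty (G ≃g cycleGraph 3)) (hpaw : ¬Nonempty (G ≃g pawGraph))
    (h4 : ¬Nonempty (G ≃g cycleGraph 4)) :
    (Fintype.card V - 1) * (Fintype.card V - 2) -
      2 * ((Fintype.card V - numPendant G - 1) / 2) ≤ PI G := by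
  classical
  have hc := hG.1
  have hPIlow := PI_lower G hc
  have hcount := cactus_count G hG
  set n := Fintype.card V with hn
  set m := G.edgeFinset.card with hm
  set k := numPendant G with hk
  set c := m - (n - 1) with hcdef
  rcases hcount with heq | ⟨hge, hineq⟩
  · -- tree case : c = 0
    have hc0 : c = 0 := by omega
    rw [hc0, Nat.mul_zero, Nat.add_zero] at hPIlow
    have h1 : (n - 1) * (n - 2) ≤ PI G := by
      calc (n - 1) * (n - 2) = m * (n - 2) := by rw [heq]
        _ ≤ PI G := hPIlow
    exact le_trans (Nat.sub_le _ _) h1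
  · rcases Nat.lt_or_ge n 2 with hlt | hge2
    · -- tiny case
      have hn1 : n - 1 = 0 := by omega
      rw [hn1, Nat.zero_mul]
      omega
    · obtain ⟨d, hd⟩ : ∃ d, n = d + 2 := ⟨n - 2, by omega⟩
      set q := (n - k - 1) / 2 with hq
      have hcq : c ≤ q := by
        rw [hq]
        rw [Nat.le_div_iff_mul_le (by norm_num : 0 < 2)]
        omega
      have e2 : m = (n - 1) + c := by omega
      have e4 : (n - 1) * (n - 2) + c * (n - 2) ≤ PI G + n * c := by
        have e3 : ((n - 1) + c) * (n - 2) ≤ PI G + n * c := by rw [← e2]; exact hPIlow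
        rwa [add_mul] at e3
      have e5 : n * c = c * (n - 2) + 2 * c := by
        rw [hd, Nat.add_sub_cancel]
        ring
      have key : (n - 1) * (n - 2) ≤ PI G + 2 * c := by linarith [e4, e5]
      rw [Nat.sub_le_iff_le_add]
      calc (n - 1) * (n - 2) ≤ PI G + 2 * c := key
        _ ≤ PI G + 2 * q := by omega
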